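/- arXiv:1410.4247 — 2 statements merged into one kernel-verified Lean document; each statement's English description precedes it below -/
import Mathlib

section
/- Let Ŝₖ,ₙ : [0,τ] → [0,1], k = 1,…,m, be estimators indexed by n, and suppose sup_t |Ŝ_{k₀,n}(t) − S(t)| → 0 as n → ∞ for some fixed k₀, where S : [0,τ] → [0,1]. Let α̂ₙ minimize ∫₀^τ (Σₖ αₖ Ŝₖ,ₙ(t) − S(t))² dt over the simplex {α : αₖ ≥ 0, Σ αₖ = 1}. Then |∫₀^τ Σₖ α̂ₖ,ₙ Ŝₖ,ₙ(t) dt − ∫₀^τ S(t) dt| → 0. -/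
open MeasureTheory Filter

/-- Bounded measurable functions are integrable on `Ioc 0 τ`. -/
lemma integrableOn_of_bdd {τ : ℝ} {f : ℝ → ℝ} (hm : Measurable f) (C : ℝ)
    (hC : ∀ t ∈ Set.Ioc (0 : ℝ) τ, |f t| ≤ C) :
    IntegrableOn f (Set.Ioc 0 τ) := by
  haveI : IsFiniteMeasure (volume.restrict (Set.Ioc (0 : ℝ) τ)) := by
    constructor
    rw [Measure.restrict_apply_univ, Real.volume_Ioc]
    exact ENNReal.ofReal_lt_top
  refine (integrable_const C).mono' hm.aestronglyMeasurable ?_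
  filter_upwards [ae_restrict_mem measurableSet_Ioc] with t ht
  simpa using hC t ht

theorem stmt_12 (τ : ℝ) (hτ : 0 < τ) (m : ℕ)
    (Shat : ℕ → Fin m → ℝ → ℝ) (S : ℝ → ℝ)
    (hmeas : ∀ n k, Measurable (Shat n k)) (hmeasS : Measurable S)
    (hrange : ∀ n k, ∀ t ∈ Set.Icc 0 τ, Shat n k t ∈ Set.Icc (0 : ℝ) 1)
    (hSrange : ∀ t ∈ Set.Icc 0 τ, S t ∈ Set.Icc (0 : ℝ) 1)
    (k₀ : Fin m)
    (hunif : TendstoUniformlyOn (fun n => Shat n k₀) S atTop (Set.Icc 0 τ))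
    (αhat : ℕ → Fin m → ℝ)
    (hα : ∀ n k, 0 ≤ αhat n k) (hαsum : ∀ n, ∑ k, αhat n k = 1)
    (hmin : ∀ n, ∀ α : Fin m → ℝ, (∀ k, 0 ≤ α k) → ∑ k, α k = 1 →
      (∫ t in Set.Ioc 0 τ, ((∑ k, αhat n k * Shat n k t) - S t) ^ 2) ≤
        ∫ t in Set.Ioc 0 τ, ((∑ k, α k * Shat n k t) - S t) ^ 2) :
    Tendsto (fun n => |(∫ t in Set.Ioc 0 τ, ∑ k, αhat n k * Shat n k t) -
        ∫ t in Set.Ioc 0 τ, S t|) atTop (nhds 0) := by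
  rw [Metric.tendsto_nhds]
  intro ε hε
  set ε' : ℝ := ε / (2 * τ + 1) with hε'def
  have hε' : 0 < ε' := div_pos hε (by linarith)
  filter_upwards [Metric.tendstoUniformlyOn_iff.mp hunif ε' hε'] with n hn
  -- notation
  set g : ℝ → ℝ := fun t => ∑ k, αhat n k * Shat n k t with hg
  have hgmeas : Measurable g :=
    Finset.measurable_sum _ fun k _ => measurable_const.mul (hmeas n k)
  have hgrange : ∀ t ∈ Set.Icc (0 : ℝ) τ, g t ∈ Set.Icc (0 : ℝ) 1 := by
    intro t ht
    constructor
    · exact Finset.sum_nonneg fun k _ => mul_nonneg (hα n k) (hrange n k t ht).1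
    · calc ∑ k, αhat n k * Shat n k t ≤ ∑ k, αhat n k * 1 :=
            Finset.sum_le_sum fun k _ =>
              mul_le_mul_of_nonneg_left (hrange n k t ht).2 (hα n k)
        _ = 1 := by simp [hαsum n]
  -- integrabilities
  have hIocIcc : Set.Ioc (0:ℝ) τ ⊆ Set.Icc 0 τ := Set.Ioc_subset_Icc_self
  have hintg : IntegrableOn g (Set.Ioc 0 τ) :=
    integrableOn_of_bdd hgmeas 1 (fun t ht => by
      have := hgrange t (hIocIcc ht); rw [abs_le]; constructor <;> linarith [this.1, this.2])
  have hintS : IntegrableOn S (Set.Ioc 0 τ) :=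
    integrableOn_of_bdd hmeasS 1 (fun t ht => by
      have := hSrange t (hIocIcc ht); rw [abs_le]; constructor <;> linarith [this.1, this.2])
  have habs1 : ∀ t ∈ Set.Ioc (0:ℝ) τ, |g t - S t| ≤ 1 := by
    intro t ht
    have h1 := hgrange t (hIocIcc ht); have h2 := hSrange t (hIocIcc ht)
    rw [abs_le]; constructor <;> [linarith [h1.1, h2.2]; linarith [h1.2, h2.1]]
  have hintd : IntegrableOn (fun t => |g t - S t|) (Set.Ioc 0 τ) :=
    integrableOn_of_bdd (hgmeas.sub hmeasS).abs 1 (fun t ht => by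
      rw [abs_abs]; exact habs1 t ht)
  have hintsq : IntegrableOn (fun t => (g t - S t) ^ 2) (Set.Ioc 0 τ) :=
    integrableOn_of_bdd ((hgmeas.sub hmeasS).pow_const 2) 1 (fun t ht => by
      rw [abs_le]; constructor
      · nlinarith [sq_nonneg (g t - S t)]
      · nlinarith [habs1 t ht, abs_nonneg (g t - S t), sq_abs (g t - S t)])
  have hintsqk : IntegrableOn (fun t => (Shat n k₀ t - S t) ^ 2) (Set.Ioc 0 τ) :=
    integrableOn_of_bdd (((hmeas n k₀).sub hmeasS).pow_const 2) (ε' ^ 2) (fun t ht => by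
      have hd := hn t (hIocIcc ht)
      rw [Real.dist_eq] at hd
      rw [abs_of_nonneg (sq_nonneg _)]
      nlinarith [abs_nonneg (S t - Shat n k₀ t), sq_abs (S t - Shat n k₀ t)])
  -- step 1: L² error of g is at most L² error of Shat k₀
  have hsumδ : ∀ t, ∑ k, (if k = k₀ then (1:ℝ) else 0) * Shat n k t = Shat n k₀ t := by
    intro t
    rw [Finset.sum_eq_single k₀]
    · simp
    · intro k _ hk; simp [hk]
    · simp
  have hstep1 : (∫ t in Set.Ioc 0 τ, (g t - S t) ^ 2) ≤
      ∫ t in Set.Ioc 0 τ, (Shat n k₀ t - S t) ^ 2 := by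
    have := hmin n (fun k => if k = k₀ then 1 else 0)
      (fun k => by positivity) (by simp)
    simpa [hsumδ] using this
  -- step 2: L² error of Shat k₀ is at most ε'^2 * τ
  have hstep2 : (∫ t in Set.Ioc 0 τ, (Shat n k₀ t - S t) ^ 2) ≤ ε' ^ 2 * τ := by
    have hb : ∀ t ∈ Set.Ioc (0:ℝ) τ, (Shat n k₀ t - S t) ^ 2 ≤ ε' ^ 2 := by
      intro t ht
      have hd := hn t (hIocIcc ht)
      rw [Real.dist_eq] at hd
      nlinarith [abs_nonneg (S t - Shat n k₀ t), sq_abs (S t - Shat n k₀ t)]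
    calc (∫ t in Set.Ioc 0 τ, (Shat n k₀ t - S t) ^ 2)
        ≤ ∫ _ in Set.Ioc (0:ℝ) τ, ε' ^ 2 :=
          setIntegral_mono_on hintsqk (integrable_const _) measurableSet_Ioc hb
      _ = ε' ^ 2 * τ := by
          rw [setIntegral_const, measureReal_def, Real.volume_Ioc, smul_eq_mul,
            ENNReal.toReal_ofReal (by linarith), mul_comm]
          ring_nf
  -- step 3: pointwise |x| ≤ ε' + x²/ε'
  have hstep3 : (∫ t in Set.Ioc 0 τ, |g t - S t|) ≤
      ∫ t in Set.Ioc 0 τ, (ε' + (g t - S t) ^ 2 / ε') := by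
    refine setIntegral_mono_on hintd ((integrable_const ε').add (hintsq.div_const ε'))
      measurableSet_Ioc (fun t _ => ?_)
    have h1 : ε' * |g t - S t| ≤ ε' ^ 2 + (g t - S t) ^ 2 := by
      nlinarith [sq_nonneg (|g t - S t| - ε'), sq_abs (g t - S t), abs_nonneg (g t - S t), hε'.le]
    have h2 : 0 ≤ (ε' ^ 2 + (g t - S t) ^ 2 - ε' * |g t - S t|) / ε' :=
      div_nonneg (by linarith) hε'.le
    have h3 : (ε' ^ 2 + (g t - S t) ^ 2 - ε' * |g t - S t|) / ε'
        = ε' + (g t - S t) ^ 2 / ε' - |g t - S t| := by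
      field_simp
    linarith [h3 ▸ h2]
  -- combine
  have hval : (∫ t in Set.Ioc 0 τ, (ε' + (g t - S t) ^ 2 / ε'))
      = ε' * τ + (∫ t in Set.Ioc 0 τ, (g t - S t) ^ 2) / ε' := by
    rw [integral_add (integrable_const ε') (hintsq.div_const ε'),
      setIntegral_const, measureReal_def, Real.volume_Ioc, smul_eq_mul,
      ENNReal.toReal_ofReal (by linarith), integral_div, sub_zero, mul_comm]
  have hfinal : |(∫ t in Set.Ioc 0 τ, g t) - ∫ t in Set.Ioc 0 τ, S t| ≤ 2 * ε' * τ := by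
    calc |(∫ t in Set.Ioc 0 τ, g t) - ∫ t in Set.Ioc 0 τ, S t|
        = |∫ t in Set.Ioc 0 τ, (g t - S t)| := by rw [integral_sub hintg hintS]
      _ ≤ ∫ t in Set.Ioc 0 τ, |g t - S t| := by
          simpa using norm_integral_le_integral_norm (fun t => g t - S t)
            (μ := volume.restrict (Set.Ioc 0 τ))
      _ ≤ ε' * τ + (∫ t in Set.Ioc 0 τ, (g t - S t) ^ 2) / ε' := by
          rw [← hval]; exact hstep3
      _ ≤ ε' * τ + (ε' ^ 2 * τ) / ε' := by
          gcongr
          exact hstep1.trans hstep2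
      _ = 2 * ε' * τ := by field_simp; ring
  have h2 : 2 * ε' * τ < ε := by
    have hpos : (0:ℝ) < 2 * τ + 1 := by linarith
    rw [hε'def, show (2:ℝ) * (ε / (2 * τ + 1)) * τ = ε * (2 * τ) / (2 * τ + 1) by ring,
      div_lt_iff₀ hpos]
    nlinarith
  simp only [Real.dist_eq, sub_zero, abs_abs]
  exact lt_of_le_of_lt hfinal h2
end

section
/- Let T and C be independent nonnegative random variables with survival functions S and G, G continuous, and fix t with G(t) > 0. Set Y = min(T, C), Δ(t) = 1{min(T, t) ≤ C}, Z(t) = 1{T > t}. Then for any constant s, E[ Δ(t)/G(min(T, t)) · (Z(t) − s)² ] = E[(Z(t) − s)²] = S(t)(1−S(t)) + (s − S(t))². -/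
open MeasureTheory ProbabilityTheory

theorem stmt_17 {Ω : Type*} [MeasurableSpace Ω] (P : Measure Ω) [IsProbabilityMeasure P]
    (T C : Ω → ℝ) (hT : Measurable T) (hC : Measurable C)
    (hT0 : ∀ ω, 0 ≤ T ω) (hC0 : ∀ ω, 0 ≤ C ω)
    (hindep : IndepFun T C P)
    (S G : ℝ → ℝ)
    (hS : ∀ u, S u = (P {ω | T ω > u}).toReal)
    (hG : ∀ u, G u = (P {ω | C ω > u}).toReal)
    (hGcont : Continuous G) (t : ℝ) (hGt : 0 < G t) (s : ℝ) :
    (∫ ω, (if min (T ω) t ≤ C ω then (1 : ℝ) else 0) / G (min (T ω) t) *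
          ((if T ω > t then (1 : ℝ) else 0) - s) ^ 2 ∂P) =
        ∫ ω, ((if T ω > t then (1 : ℝ) else 0) - s) ^ 2 ∂P ∧
      (∫ ω, ((if T ω > t then (1 : ℝ) else 0) - s) ^ 2 ∂P) =
        S t * (1 - S t) + (s - S t) ^ 2 := by
  have hTm : AEMeasurable T P := hT.aemeasurable
  have hCm : AEMeasurable C P := hC.aemeasurable
  have hμT : IsProbabilityMeasure (P.map T) := Measure.isProbabilityMeasure_map hTm
  have hμC : IsProbabilityMeasure (P.map C) := Measure.isProbabilityMeasure_map hCm
  -- G is bounded below by G t on min x t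
  have hGle : ∀ x : ℝ, G t ≤ G (min x t) := by
    intro x
    rw [hG, hG]
    refine (ENNReal.toReal_le_toReal (measure_ne_top _ _) (measure_ne_top _ _)).mpr ?_
    exact measure_mono fun ω h => lt_of_le_of_lt (min_le_right x t) h
  have hGmin : ∀ x : ℝ, 0 < G (min x t) := fun x => lt_of_lt_of_le hGt (hGle x)
  -- C has no atoms (since G is continuous)
  have hCatom : ∀ a : ℝ, P {ω | C ω = a} = 0 := by
    intro a
    have hb : ∀ ε ∈ Set.Ioi (0:ℝ), (P {ω | C ω = a}).toReal ≤ G (a - ε) - G a := by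
      intro ε hε
      have hε' : (0:ℝ) < ε := hε
      have hsub : {ω | C ω = a} ⊆ {ω | C ω > a - ε} \ {ω | C ω > a} := by
        intro ω hω
        simp only [Set.mem_setOf_eq, Set.mem_diff] at *
        constructor
        · rw [hω]; linarith
        · rw [hω]; exact lt_irrefl a
      have hsub2 : {ω | C ω > a} ⊆ {ω | C ω > a - ε} := by
        intro ω h
        simp only [Set.mem_setOf_eq] at *
        linarith
      have hms : MeasurableSet {ω | C ω > a} := measurableSet_lt measurable_const hC
      have hdiff : P ({ω | C ω > a - ε} \ {ω | C ω > a})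
          = P {ω | C ω > a - ε} - P {ω | C ω > a} :=
        by exact measure_diff hsub2 hms.nullMeasurableSet (measure_ne_top P _)
      have hle : P {ω | C ω = a} ≤ P ({ω | C ω > a - ε} \ {ω | C ω > a}) := measure_mono hsub
      rw [hdiff] at hle
      have h1 : (P {ω | C ω = a}).toReal
          ≤ (P {ω | C ω > a - ε} - P {ω | C ω > a}).toReal :=
        ENNReal.toReal_mono (ne_top_of_le_ne_top (measure_ne_top _ _) tsub_le_self) hle
      rw [ENNReal.toReal_sub_of_le (measure_mono hsub2) (measure_ne_top _ _)] at h1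
      rw [hG, hG]
      exact h1
    have hlim : Filter.Tendsto (fun ε : ℝ => G (a - ε) - G a)
        (nhdsWithin 0 (Set.Ioi 0)) (nhds 0) := by
      have h1 : Filter.Tendsto (fun ε : ℝ => G (a - ε) - G a) (nhds 0)
          (nhds (G (a - 0) - G a)) :=
        ((hGcont.comp (continuous_const.sub continuous_id)).sub continuous_const).tendsto 0
      simpa using h1.mono_left nhdsWithin_le_nhds
    have hle0 : (P {ω | C ω = a}).toReal ≤ 0 :=
      ge_of_tendsto hlim (eventually_nhdsWithin_of_forall hb)
    have h0 : (P {ω | C ω = a}).toReal = 0 := le_antisymm hle0 ENNReal.toReal_nonneg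
    rcases (ENNReal.toReal_eq_zero_iff _).mp h0 with h | h
    · exact h
    · exact absurd h (measure_ne_top _ _)
  -- P(C ≥ a) = G a
  have hGe : ∀ a : ℝ, (P {ω | a ≤ C ω}).toReal = G a := by
    intro a
    rw [hG]
    congr 1
    apply le_antisymm
    · have hsub : {ω | a ≤ C ω} ⊆ {ω | C ω > a} ∪ {ω | C ω = a} := by
        intro ω h
        simp only [Set.mem_setOf_eq, Set.mem_union]
        rcases lt_or_eq_of_le (show a ≤ C ω from h) with h' | h'
        · exact Or.inl h'
        · exact Or.inr h'.symm
      calc P {ω | a ≤ C ω} ≤ P ({ω | C ω > a} ∪ {ω | C ω = a}) := measure_mono hsub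
        _ ≤ P {ω | C ω > a} + P {ω | C ω = a} := measure_union_le _ _
        _ = P {ω | C ω > a} := by rw [hCatom a, add_zero]
    · refine measure_mono fun ω h => ?_
      simp only [Set.mem_setOf_eq] at *
      exact le_of_lt h
  -- the product-space integrand
  set H : ℝ × ℝ → ℝ := fun p =>
    (if min p.1 t ≤ p.2 then (1:ℝ) else 0) / G (min p.1 t)
      * ((if p.1 > t then (1:ℝ) else 0) - s) ^ 2 with hHdef
  have hms1 : MeasurableSet {p : ℝ × ℝ | min p.1 t ≤ p.2} :=
    measurableSet_le (measurable_fst.min measurable_const) measurable_snd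
  have hms2 : MeasurableSet {p : ℝ × ℝ | p.1 > t} :=
    measurableSet_lt measurable_const measurable_fst
  have hHmeas : Measurable H := by
    apply Measurable.mul
    · exact (Measurable.ite hms1 measurable_const measurable_const).div
        (hGcont.measurable.comp (measurable_fst.min measurable_const))
    · exact ((Measurable.ite hms2 measurable_const measurable_const).sub
        measurable_const).pow_const 2
  have hHbound : ∀ p : ℝ × ℝ, ‖H p‖ ≤ (1 / G t) * (1 + |s|) ^ 2 := by
    intro p
    have hA0 : (0:ℝ) ≤ (if min p.1 t ≤ p.2 then (1:ℝ) else 0) := by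
      split <;> norm_num
    have hA1 : (if min p.1 t ≤ p.2 then (1:ℝ) else 0) ≤ 1 := by
      split <;> norm_num
    have hz : |(if p.1 > t then (1:ℝ) else 0) - s| ≤ 1 + |s| := by
      split
      · calc |(1:ℝ) - s| ≤ |(1:ℝ)| + |s| := abs_sub _ _
          _ = 1 + |s| := by rw [abs_one]
      · calc |(0:ℝ) - s| = |s| := by rw [zero_sub, abs_neg]
          _ ≤ 1 + |s| := by linarith [abs_nonneg s]
    have hsq : ((if p.1 > t then (1:ℝ) else 0) - s) ^ 2 ≤ (1 + |s|) ^ 2 := by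
      rw [← sq_abs]
      exact pow_le_pow_left₀ (abs_nonneg _) hz 2
    have hdiv : (if min p.1 t ≤ p.2 then (1:ℝ) else 0) / G (min p.1 t) ≤ 1 / G t :=
      div_le_div₀ zero_le_one hA1 hGt (hGle p.1)
    have hH0 : 0 ≤ H p := mul_nonneg (div_nonneg hA0 (hGmin p.1).le) (sq_nonneg _)
    rw [Real.norm_eq_abs, abs_of_nonneg hH0]
    exact mul_le_mul hdiv hsq (sq_nonneg _) (by positivity)
  have hHint : Integrable H ((P.map T).prod (P.map C)) :=
    (integrable_const ((1 / G t) * (1 + |s|) ^ 2)).mono' hHmeas.aestronglyMeasurable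
      (Filter.Eventually.of_forall hHbound)
  -- step 1: rewrite LHS as an integral over the product of the laws
  have key1 : (∫ ω, (if min (T ω) t ≤ C ω then (1 : ℝ) else 0) / G (min (T ω) t) *
        ((if T ω > t then (1 : ℝ) else 0) - s) ^ 2 ∂P)
      = ∫ p, H p ∂((P.map T).prod (P.map C)) := by
    rw [← (indepFun_iff_map_prod_eq_prod_map_map hTm hCm).mp hindep,
      integral_map (hTm.prodMk hCm) hHmeas.aestronglyMeasurable]
  -- step 2: Fubini and computing the inner integral
  have key2 : (∫ p, H p ∂((P.map T).prod (P.map C)))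
      = ∫ x, ((if x > t then (1:ℝ) else 0) - s) ^ 2 ∂(P.map T) := by
    rw [MeasureTheory.integral_prod _ hHint]
    refine integral_congr_ae (Filter.Eventually.of_forall fun x => ?_)
    show (∫ y, H (x, y) ∂(P.map C)) = ((if x > t then (1:ℝ) else 0) - s) ^ 2
    have hrw : (fun y => H (x, y)) = fun y =>
        ({y : ℝ | min x t ≤ y}.indicator (fun _ => (1:ℝ)) y)
          * (((if x > t then (1:ℝ) else 0) - s) ^ 2 / G (min x t)) := by
      funext y
      simp only [hHdef, Set.indicator, Set.mem_setOf_eq]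
      split <;> ring
    rw [hrw, integral_mul_const]
    have hmsy : MeasurableSet {y : ℝ | min x t ≤ y} :=
      measurableSet_le measurable_const measurable_id
    rw [integral_indicator_const (1:ℝ) hmsy]
    have hmap : (P.map C) {y : ℝ | min x t ≤ y} = P {ω | min x t ≤ C ω} := by
      rw [Measure.map_apply hC hmsy]
      rfl
    rw [measureReal_def, hmap, hGe (min x t), smul_eq_mul, mul_one, mul_comm,
      div_mul_cancel₀ _ (hGmin x).ne']
  -- step 3: back to Ω
  have key3 : (∫ x, ((if x > t then (1:ℝ) else 0) - s) ^ 2 ∂(P.map T))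
      = ∫ ω, ((if T ω > t then (1 : ℝ) else 0) - s) ^ 2 ∂P := by
    have hmeas : Measurable fun x : ℝ => ((if x > t then (1:ℝ) else 0) - s) ^ 2 :=
      ((Measurable.ite (measurableSet_lt measurable_const measurable_id)
        measurable_const measurable_const).sub measurable_const).pow_const 2
    rw [integral_map hTm hmeas.aestronglyMeasurable]
  -- part 2: the value of the Brier score
  have hTms : MeasurableSet {ω | T ω > t} := measurableSet_lt measurable_const hT
  have hrw2 : ∀ ω, ((if T ω > t then (1:ℝ) else 0) - s) ^ 2
      = s ^ 2 + ({ω | T ω > t}.indicator (fun _ => (1:ℝ) - 2 * s) ω) := by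
    intro ω
    by_cases h : T ω > t
    · simp only [Set.indicator, Set.mem_setOf_eq, h, if_true]
      ring
    · simp only [Set.indicator, Set.mem_setOf_eq, h, if_false]
      ring
  have part2 : (∫ ω, ((if T ω > t then (1 : ℝ) else 0) - s) ^ 2 ∂P)
      = S t * (1 - S t) + (s - S t) ^ 2 := by
    simp only [hrw2]
    rw [integral_add (integrable_const _)
      ((integrable_const ((1:ℝ) - 2 * s)).indicator hTms),
      integral_const, integral_indicator_const _ hTms, hS]
    simp only [measureReal_def, measure_univ, ENNReal.toReal_one, one_smul, smul_eq_mul]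
    ring
  exact ⟨key1.trans (key2.trans key3), part2⟩
end
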